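/- Let $r \mid n$ and $d \mid n$. Then $\sum_{\zeta \in \mu_d^{\circ}} \zeta = \sum_{e \mid r,\, f \mid (n/r),\, \mathrm{lcm}(e,f)=d} \;\sum_{\eta\in\mu_e^{\circ},\,\theta\in\mu_f^{\circ}} \eta^{n/r}\theta$, i.e. $\mu(d) = \sum_{\substack{e\mid r,\ f\mid(n/r)\\ \mathrm{lcm}(e,f)=d}} \frac{\mu(f)\,\mu(e/\gcd(n/r,e))\,\phi(e)}{\phi(e/\gcd(n/r,e))}$. -/

import Mathlib

open Finset Polynomial

/-- Sum of `m`-th powers over all `k`-th roots of unity. -/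
lemma sum_nthRoots_pow (k m : ℕ) (hk : 0 < k) :
    ∑ z ∈ nthRootsFinset k (1 : ℂ), z ^ m = if k ∣ m then (k : ℂ) else 0 := by
  have hζ : IsPrimitiveRoot (Complex.exp (2 * Real.pi * Complex.I / k)) k :=
    Complex.isPrimitiveRoot_exp k hk.ne'
  set ζ := Complex.exp (2 * Real.pi * Complex.I / k) with hζdef
  by_cases h : k ∣ m
  · rw [if_pos h]
    rw [Finset.sum_congr rfl (fun z hz => ?_), Finset.sum_const, hζ.card_nthRootsFinset,
      nsmul_eq_mul, mul_one]
    obtain ⟨c, rfl⟩ := h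
    rw [pow_mul, (Polynomial.mem_nthRootsFinset hk (1 : ℂ)).mp hz, one_pow]
  · rw [if_neg h]
    have h0 : ζ ≠ 0 := hζ.ne_zero hk.ne'
    have himg : (nthRootsFinset k (1 : ℂ)).image (ζ * ·) = nthRootsFinset k (1 : ℂ) := by
      apply Finset.eq_of_subset_of_card_le
      · intro w hw
        obtain ⟨z, hz, rfl⟩ := Finset.mem_image.mp hw
        rw [Polynomial.mem_nthRootsFinset hk] at hz ⊢
        rw [mul_pow, hζ.pow_eq_one, one_mul, hz]
      · rw [Finset.card_image_of_injective _ (mul_right_injective₀ h0)]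
    have key : ∑ z ∈ nthRootsFinset k (1 : ℂ), z ^ m
        = ζ ^ m * ∑ z ∈ nthRootsFinset k (1 : ℂ), z ^ m := by
      conv_lhs => rw [← himg]
      rw [Finset.sum_image (fun a _ b _ hab => mul_right_injective₀ h0 hab)]
      simp [mul_pow, Finset.mul_sum]
    have hζm : ζ ^ m ≠ 1 := fun hh => h ((hζ.pow_eq_one_iff_dvd m).mp hh)
    have := sub_eq_zero.mpr key.symm
    rw [← sub_one_mul] at this
    rcases mul_eq_zero.mp this with h1 | h1
    · exact absurd (sub_eq_zero.mp h1) hζm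
    · exact h1

/-- Sum over all `k`-th roots of unity as sum over divisors of primitive-root sums. -/
lemma sum_nthRoots_eq_divisors (k : ℕ) (hk : 0 < k) (F : ℂ → ℂ) :
    ∑ z ∈ nthRootsFinset k (1 : ℂ), F z = ∑ c ∈ k.divisors, ∑ z ∈ primitiveRoots c ℂ, F z := by
  have : NeZero k := ⟨hk.ne'⟩
  have hζ : IsPrimitiveRoot (Complex.exp (2 * Real.pi * Complex.I / k)) k :=
    Complex.isPrimitiveRoot_exp k hk.ne'
  rw [IsPrimitiveRoot.nthRoots_one_eq_biUnion_primitiveRoots, Finset.sum_biUnion]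
  intro a _ b _ hab
  exact IsPrimitiveRoot.disjoint hab

open ArithmeticFunction in
lemma sum_moebius_divisors (k : ℕ) (hk : 0 < k) :
    ∑ c ∈ k.divisors, (moebius c : ℂ) = if k = 1 then 1 else 0 := by
  have := congrArg (fun f : ArithmeticFunction ℤ => f k) moebius_mul_coe_zeta
  simp only [mul_apply, one_apply, hk.ne'] at this
  rw [Nat.sum_divisorsAntidiagonal (fun a b => (moebius a) * (ArithmeticFunction.zeta : ArithmeticFunction ℤ) b)] at this
  have h2 : ∑ c ∈ k.divisors, (moebius c : ℤ) = if k = 1 then 1 else 0 := by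
    rw [← this]
    refine Finset.sum_congr rfl fun c hc => ?_
    rw [Nat.mem_divisors] at hc
    have : (0 : ℕ) < k / c := Nat.div_pos (Nat.le_of_dvd hk hc.1) (Nat.pos_of_dvd_of_pos hc.1 hk)
    simp [natCoe_apply, zeta_apply, this.ne', mul_one]
  calc ∑ c ∈ k.divisors, (moebius c : ℂ)
      = ((∑ c ∈ k.divisors, (moebius c : ℤ) : ℤ) : ℂ) := by push_cast; rfl
    _ = _ := by rw [h2]; split <;> simp

open ArithmeticFunction in
/-- Sum of primitive `d`-th roots of unity equals `μ d`. -/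
lemma sum_primitiveRoots_moebius (d : ℕ) :
    ∑ z ∈ primitiveRoots d ℂ, z = (moebius d : ℂ) := by
  induction d using Nat.strong_induction_on with
  | _ d ih =>
  rcases Nat.eq_zero_or_pos d with rfl | hd
  · simp [primitiveRoots_zero]
  · have key : ∑ c ∈ d.divisors, ∑ z ∈ primitiveRoots c ℂ, z = if d = 1 then 1 else 0 := by
      rw [← sum_nthRoots_eq_divisors d hd]
      have := sum_nthRoots_pow d 1 hd
      simp only [pow_one, Nat.dvd_one] at this
      rw [this]
      split <;> simp_all
    have keyμ := sum_moebius_divisors d hd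
    rw [← Nat.insert_self_properDivisors hd.ne', Finset.sum_insert Nat.self_notMem_properDivisors] at key keyμ
    have hih : ∑ c ∈ d.properDivisors, (∑ z ∈ primitiveRoots c ℂ, z)
        = ∑ c ∈ d.properDivisors, (moebius c : ℂ) :=
      Finset.sum_congr rfl fun c hc => ih c (Nat.mem_properDivisors.mp hc).2
    linear_combination key - keyμ - hih
open Finset Polynomial

/-- Reindex a sum over primitive `k`-th roots by units of `ZMod k`. -/
lemma sum_primitiveRoots_units {ζ : ℂ} {k : ℕ} [NeZero k] (hζ : IsPrimitiveRoot ζ k)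
    (F : ℂ → ℂ) :
    ∑ η ∈ primitiveRoots k ℂ, F η = ∑ u : (ZMod k)ˣ, F (ζ ^ ((u : ZMod k).val)) := by
  have hk : 0 < k := Nat.pos_of_ne_zero (NeZero.ne k)
  rw [eq_comm]
  refine Finset.sum_bij (fun u _ => ζ ^ ((u : ZMod k).val)) ?_ ?_ ?_ ?_
  · intro u _
    exact (mem_primitiveRoots hk).mpr (hζ.pow_of_coprime _ (ZMod.val_coe_unit_coprime u))
  · intro u _ v _ h
    have := hζ.pow_inj (ZMod.val_lt _) (ZMod.val_lt _) h
    exact Units.ext (ZMod.val_injective k this)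
  · intro ξ hξ
    obtain ⟨i, hik, hi, hξi⟩ := (hζ.isPrimitiveRoot_iff (ξ := ξ)).mp
      ((mem_primitiveRoots hk).mp hξ)
    refine ⟨ZMod.unitOfCoprime i hi, Finset.mem_univ _, ?_⟩
    show ζ ^ ((ZMod.unitOfCoprime i hi : ZMod k)).val = ξ
    rw [ZMod.coe_unitOfCoprime, ZMod.val_natCast, Nat.mod_eq_of_lt hik, hξi]
  · intro u _
    rfl

open ArithmeticFunction in
/-- Ramanujan sum evaluation. -/
lemma ramanujan_sum (e m : ℕ) (he : 0 < e) :
    ∑ η ∈ primitiveRoots e ℂ, η ^ m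
      = (((moebius (e / Nat.gcd m e) : ℚ) * (Nat.totient e : ℚ) /
          (Nat.totient (e / Nat.gcd m e) : ℚ)) : ℂ) := by
  haveI : NeZero e := ⟨he.ne'⟩
  set g := Nat.gcd m e with hg
  have hgpos : 0 < g := Nat.gcd_pos_of_pos_right m he
  set e' := e / g with he'def
  have he'dvd : e' ∣ e := Nat.div_dvd_of_dvd (Nat.gcd_dvd_right m e)
  have he'pos : 0 < e' := Nat.div_pos (Nat.le_of_dvd he (Nat.gcd_dvd_right m e)) hgpos
  haveI : NeZero e' := ⟨he'pos.ne'⟩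
  have hZ : IsPrimitiveRoot (Complex.exp (2 * Real.pi * Complex.I / e)) e :=
    Complex.isPrimitiveRoot_exp e he.ne'
  set Z := Complex.exp (2 * Real.pi * Complex.I / e)
  have hm : g * (m / g) = m := Nat.mul_div_cancel' (Nat.gcd_dvd_left m e)
  have hge : e = g * e' := (Nat.mul_div_cancel' (Nat.gcd_dvd_right m e)).symm
  have hψ : IsPrimitiveRoot (Z ^ m) e' := by
    have h1 : IsPrimitiveRoot (Z ^ g) e' := hZ.pow he hge
    have h2 := h1.pow_of_coprime (m / g) (Nat.coprime_div_gcd_div_gcd hgpos)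
    rwa [← pow_mul, hm] at h2
  set ψ := Z ^ m with hψdef
  set W := ZMod.unitsMap he'dvd with hW
  have hsurj : Function.Surjective W := ZMod.unitsMap_surjective he'dvd
  have hterm : ∀ u : (ZMod e)ˣ, (Z ^ ((u : ZMod e).val)) ^ m
      = ψ ^ (((W u : ZMod e')).val) := by
    intro u
    have hval : ((W u : ZMod e')).val = (u : ZMod e).val % e' := by
      rw [hW, ZMod.unitsMap_def]
      rw [Units.coe_map]
      show (ZMod.castHom he'dvd (ZMod e') (u : ZMod e)).val = _
      rw [ZMod.castHom_apply, ← ZMod.natCast_val, ZMod.val_natCast]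
    rw [← pow_mul, mul_comm, pow_mul, ← hψdef, hval]
    conv_lhs => rw [← Nat.div_add_mod ((u : ZMod e).val) e', pow_add, pow_mul,
      hψ.pow_eq_one, one_pow, one_mul]
  set c := #(Finset.univ.filter (fun u : (ZMod e)ˣ => W u = 1)) with hc
  have hfib : ∀ v : (ZMod e')ˣ, #(Finset.univ.filter (fun u => W u = v)) = c := by
    intro v
    obtain ⟨u0, hu0⟩ := hsurj v
    exact MonoidHom.card_fiber_eq_of_mem_range W ⟨u0, hu0⟩ ⟨1, map_one W⟩
  have hsum : ∀ (F : (ZMod e')ˣ → ℂ), ∑ u : (ZMod e)ˣ, F (W u) = c * ∑ v : (ZMod e')ˣ, F v := by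
    intro F
    rw [← Finset.sum_fiberwise_of_maps_to' (g := W) (fun u _ => Finset.mem_univ (W u)) F]
    rw [Finset.mul_sum]
    refine Finset.sum_congr rfl fun v _ => ?_
    rw [Finset.sum_const, hfib v, nsmul_eq_mul]
  have hcard : c * Nat.totient e' = Nat.totient e := by
    have h1 := Finset.card_eq_sum_card_fiberwise
      (fun (u : (ZMod e)ˣ) (_ : u ∈ Finset.univ) => Finset.mem_univ (W u))
    rw [Finset.sum_congr rfl (fun v _ => hfib v), Finset.sum_const, smul_eq_mul,
      Finset.card_univ, Finset.card_univ, ZMod.card_units_eq_totient,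
      ZMod.card_units_eq_totient] at h1
    rw [mul_comm]
    exact h1.symm
  rw [sum_primitiveRoots_units hZ (F := (· ^ m))]
  simp only [hterm]
  rw [hsum (fun v => ψ ^ ((v : ZMod e').val)),
    ← sum_primitiveRoots_units hψ (F := fun z => z), sum_primitiveRoots_moebius]
  have hφ' : (Nat.totient e' : ℂ) ≠ 0 := Nat.cast_ne_zero.mpr (Nat.totient_pos.mpr he'pos).ne'
  have hcardC : (c : ℂ) * (Nat.totient e' : ℂ) = (Nat.totient e : ℂ) := by exact_mod_cast hcard
  push_cast
  rw [eq_div_iff hφ']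
  linear_combination ((moebius e' : ℤ) : ℂ) * hcardC

lemma key_divisor_sum (r mm : ℕ) (hr : 0 < r) (hm : 0 < mm) (D : ℕ) (hDn : D ∣ r * mm)
    (hD0 : 0 < D) :
    ∑ c ∈ D.divisors, (∑ z ∈ primitiveRoots c ℂ, z)
      = ∑ c ∈ D.divisors,
          ∑ ef ∈ (r.divisors ×ˢ mm.divisors).filter (fun ef => Nat.lcm ef.1 ef.2 = c),
            ∑ η ∈ primitiveRoots ef.1 ℂ, ∑ θ ∈ primitiveRoots ef.2 ℂ, η ^ mm * θ := by
  have hgg : ∀ a : ℕ, 0 < a → a.divisors.filter (· ∣ D) = (Nat.gcd a D).divisors := by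
    intro a ha
    ext x
    rw [Finset.mem_filter, Nat.mem_divisors, Nat.mem_divisors, Nat.dvd_gcd_iff]
    constructor
    · rintro ⟨⟨h1, h2⟩, h3⟩
      exact ⟨⟨h1, h3⟩, Nat.gcd_ne_zero_left h2⟩
    · rintro ⟨⟨h1, h3⟩, _⟩
      exact ⟨⟨h1, ha.ne'⟩, h3⟩
  -- LHS
  have hLHS : ∑ c ∈ D.divisors, (∑ z ∈ primitiveRoots c ℂ, z)
      = if D = 1 then 1 else 0 := by
    rw [← sum_nthRoots_eq_divisors D hD0 (fun z => z)]
    have := sum_nthRoots_pow D 1 hD0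
    simp only [pow_one, Nat.dvd_one] at this
    rw [this]
    split <;> simp_all
  -- RHS
  have hstep1 : ∑ c ∈ D.divisors,
      ∑ ef ∈ (r.divisors ×ˢ mm.divisors).filter (fun ef => Nat.lcm ef.1 ef.2 = c),
        ∑ η ∈ primitiveRoots ef.1 ℂ, ∑ θ ∈ primitiveRoots ef.2 ℂ, η ^ mm * θ
      = ∑ ef ∈ (r.divisors ×ˢ mm.divisors).filter
          (fun ef => Nat.lcm ef.1 ef.2 ∈ D.divisors),
          ∑ η ∈ primitiveRoots ef.1 ℂ, ∑ θ ∈ primitiveRoots ef.2 ℂ, η ^ mm * θ :=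
    Finset.sum_fiberwise_eq_sum_filter _ _ _ _
  have hfilter : (r.divisors ×ˢ mm.divisors).filter
        (fun ef => Nat.lcm ef.1 ef.2 ∈ D.divisors)
      = (Nat.gcd r D).divisors ×ˢ (Nat.gcd mm D).divisors := by
    rw [← hgg r hr, ← hgg mm hm, ← Finset.filter_product]
    apply Finset.filter_congr
    intro ef _
    simp only [Nat.mem_divisors, hD0.ne', Ne, not_false_iff, and_true, Nat.lcm_dvd_iff]
  have hprod : ∑ ef ∈ (Nat.gcd r D).divisors ×ˢ (Nat.gcd mm D).divisors,
        ∑ η ∈ primitiveRoots ef.1 ℂ, ∑ θ ∈ primitiveRoots ef.2 ℂ, η ^ mm * θ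
      = (∑ e ∈ (Nat.gcd r D).divisors, ∑ η ∈ primitiveRoots e ℂ, η ^ mm)
        * (∑ f ∈ (Nat.gcd mm D).divisors, ∑ θ ∈ primitiveRoots f ℂ, θ) := by
    rw [Finset.sum_product, Finset.sum_mul_sum]
    refine Finset.sum_congr rfl fun e _ => Finset.sum_congr rfl fun f _ => ?_
    rw [Finset.sum_mul_sum]
  have hgcd1 : 0 < Nat.gcd r D := Nat.gcd_pos_of_pos_left D hr
  have hgcd2 : 0 < Nat.gcd mm D := Nat.gcd_pos_of_pos_left D hm
  have hA : ∑ e ∈ (Nat.gcd r D).divisors, ∑ η ∈ primitiveRoots e ℂ, η ^ mm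
      = if Nat.gcd r D ∣ mm then (Nat.gcd r D : ℂ) else 0 := by
    rw [← sum_nthRoots_eq_divisors _ hgcd1 (fun z => z ^ mm), sum_nthRoots_pow _ _ hgcd1]
  have hB : ∑ f ∈ (Nat.gcd mm D).divisors, ∑ θ ∈ primitiveRoots f ℂ, θ
      = if Nat.gcd mm D = 1 then 1 else 0 := by
    rw [← sum_nthRoots_eq_divisors _ hgcd2 (fun z => z)]
    have := sum_nthRoots_pow _ 1 hgcd2
    simp only [pow_one, Nat.dvd_one] at this
    rw [this]
    split <;> simp_all
  rw [hLHS, hstep1, hfilter, hprod, hA, hB]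
  by_cases hD1 : D = 1
  · subst hD1
    simp
  · rw [if_neg hD1]
    by_cases h1 : Nat.gcd mm D = 1
    · by_cases h2 : Nat.gcd r D ∣ mm
      · exfalso
        have hgr : Nat.gcd r D ∣ Nat.gcd mm D := Nat.dvd_gcd h2 (Nat.gcd_dvd_right r D)
        have hgr1 : Nat.gcd r D = 1 := Nat.eq_one_of_dvd_one (h1 ▸ hgr)
        have hcop : Nat.Coprime D r := Nat.coprime_comm.mp hgr1
        have hDm : D ∣ mm := hcop.dvd_of_dvd_mul_left hDn
        have : D ∣ Nat.gcd mm D := Nat.dvd_gcd hDm dvd_rfl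
        exact hD1 (Nat.eq_one_of_dvd_one (h1 ▸ this))
      · rw [if_neg h2, zero_mul]
    · rw [if_neg h1, mul_zero]

lemma part1 (r mm : ℕ) (hr : 0 < r) (hm : 0 < mm) :
    ∀ d, d ∣ r * mm →
      (∑ z ∈ primitiveRoots d ℂ, z)
        = ∑ ef ∈ (r.divisors ×ˢ mm.divisors).filter (fun ef => Nat.lcm ef.1 ef.2 = d),
            ∑ η ∈ primitiveRoots ef.1 ℂ, ∑ θ ∈ primitiveRoots ef.2 ℂ, η ^ mm * θ := by
  intro d
  induction d using Nat.strong_induction_on with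
  | _ d ih =>
  intro hd
  have hd0 : 0 < d := Nat.pos_of_dvd_of_pos hd (Nat.mul_pos hr hm)
  have key := key_divisor_sum r mm hr hm d hd hd0
  rw [← Nat.insert_self_properDivisors hd0.ne',
    Finset.sum_insert Nat.self_notMem_properDivisors,
    Finset.sum_insert Nat.self_notMem_properDivisors] at key
  have hih : ∑ c ∈ d.properDivisors, (∑ z ∈ primitiveRoots c ℂ, z)
      = ∑ c ∈ d.properDivisors,
          ∑ ef ∈ (r.divisors ×ˢ mm.divisors).filter (fun ef => Nat.lcm ef.1 ef.2 = c),
            ∑ η ∈ primitiveRoots ef.1 ℂ, ∑ θ ∈ primitiveRoots ef.2 ℂ, η ^ mm * θ :=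
    Finset.sum_congr rfl fun c hc => by
      obtain ⟨hcd, hclt⟩ := Nat.mem_properDivisors.mp hc
      exact ih c hclt (hcd.trans hd)
  linear_combination key - hih



open ArithmeticFunction in
/-- For `r ∣ n` and `d ∣ n`: the sum of the primitive `d`-th roots of unity equals
`∑_{e ∣ r, f ∣ (n/r), lcm(e,f) = d} ∑_{η ∈ μ_e°, θ ∈ μ_f°} η^(n/r) θ`; equivalently,
`μ(d) = ∑_{e,f} μ(f) μ(e/gcd(n/r,e)) φ(e) / φ(e/gcd(n/r,e))`. -/
theorem stmt11 (n r d : ℕ) (hn : 0 < n) (hr : r ∣ n) (hd : d ∣ n) :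
    (∑ z ∈ primitiveRoots d ℂ, z =
        ∑ ef ∈ (Nat.divisors r ×ˢ Nat.divisors (n / r)).filter
          (fun ef => Nat.lcm ef.1 ef.2 = d),
          ∑ η ∈ primitiveRoots ef.1 ℂ, ∑ θ ∈ primitiveRoots ef.2 ℂ, η ^ (n / r) * θ)
    ∧ ((moebius d : ℚ) =
        ∑ ef ∈ (Nat.divisors r ×ˢ Nat.divisors (n / r)).filter
          (fun ef => Nat.lcm ef.1 ef.2 = d),
          (moebius ef.2 : ℚ) * (moebius (ef.1 / Nat.gcd (n / r) ef.1) : ℚ)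
            * (Nat.totient ef.1 : ℚ) / (Nat.totient (ef.1 / Nat.gcd (n / r) ef.1) : ℚ)) := by
  have hr0 : 0 < r := Nat.pos_of_dvd_of_pos hr hn
  have hm0 : 0 < n / r := Nat.div_pos (Nat.le_of_dvd hn hr) hr0
  have hrm : r * (n / r) = n := Nat.mul_div_cancel' hr
  have hp1 := part1 r (n / r) hr0 hm0 d (by rw [hrm]; exact hd)
  refine ⟨hp1, ?_⟩
  have h2 : ∀ ef ∈ (Nat.divisors r ×ˢ Nat.divisors (n / r)).filter
        (fun ef => Nat.lcm ef.1 ef.2 = d),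
      (∑ η ∈ primitiveRoots ef.1 ℂ, ∑ θ ∈ primitiveRoots ef.2 ℂ, η ^ (n / r) * θ)
        = ((((moebius ef.2 : ℚ) * (moebius (ef.1 / Nat.gcd (n / r) ef.1) : ℚ)
            * (Nat.totient ef.1 : ℚ) / (Nat.totient (ef.1 / Nat.gcd (n / r) ef.1) : ℚ)) : ℚ)
            : ℂ) := by
    intro ef hef
    obtain ⟨hmem, _⟩ := Finset.mem_filter.mp hef
    obtain ⟨h1m, _⟩ := Finset.mem_product.mp hmem
    have he : 0 < ef.1 := Nat.pos_of_mem_divisors h1m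
    rw [← Finset.sum_mul_sum, ramanujan_sum ef.1 (n / r) he, sum_primitiveRoots_moebius ef.2]
    push_cast
    ring
  rw [sum_primitiveRoots_moebius d, Finset.sum_congr rfl h2] at hp1
  exact_mod_cast hp1
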